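/- Let t0 ∈ ℝ, let ξ : [t0, ∞) → [0, ∞) be absolutely continuous, let β : [t0, ∞) → [0, ∞) be locally integrable, and let C, M, T be positive constants such that sup_{t ≥ t0} ∫_t^{t+T} β(s) ds ≤ M and ξ'(t) + C·ξ(t) ≤ β(t) for almost every t ≥ t0. Then for all t ≥ t0 one has ξ(t) ≤ e^{−C(t−t0)}·ξ(t0) + M·e^{2CT}/(e^{CT} − 1). -/

import Mathlib

open MeasureTheory Real

/-- Uniform-in-time Gronwall-type lemma (Lemma 2.1 of the paper):
if ξ : [t0,∞) → [0,∞) is absolutely continuous (encoded by: ξ has derivative ξ' a.e. on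
[t0,∞) and satisfies the fundamental theorem of calculus there), β : [t0,∞) → [0,∞) is
locally integrable, sup_{t ≥ t0} ∫_t^{t+T} β ≤ M, and ξ' + C ξ ≤ β a.e. on [t0,∞), then
ξ(t) ≤ e^{-C(t-t0)} ξ(t0) + M e^{2CT}/(e^{CT} - 1) for all t ≥ t0. -/
theorem gronwall_uniform_in_time
    (t0 : ℝ) (ξ ξ' β : ℝ → ℝ) (C M T : ℝ)
    (hC : 0 < C) (hM : 0 < M) (hT : 0 < T)
    (hξ_nonneg : ∀ t, t0 ≤ t → 0 ≤ ξ t)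
    (hβ_nonneg : ∀ t, t0 ≤ t → 0 ≤ β t)
    (hβ_loc : LocallyIntegrableOn β (Set.Ici t0))
    (hξ_deriv : ∀ᵐ t ∂(volume : Measure ℝ), t0 ≤ t → HasDerivAt ξ (ξ' t) t)
    (hξ_ftc : ∀ t, t0 ≤ t → ξ t - ξ t0 = ∫ s in t0..t, ξ' s)
    (hsup : ∀ t, t0 ≤ t → ∫ s in t..(t + T), β s ≤ M)
    (hineq : ∀ᵐ t ∂(volume : Measure ℝ), t0 ≤ t → ξ' t + C * ξ t ≤ β t) :
    ∀ t, t0 ≤ t →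
      ξ t ≤ Real.exp (-C * (t - t0)) * ξ t0 +
        M * (Real.exp (2 * C * T) / (Real.exp (C * T) - 1)) := by
  -- a.e. strong measurability of ξ' on [t0, ∞)
  have hae : ξ' =ᵐ[volume.restrict (Set.Ici t0)] deriv ξ := by
    filter_upwards [ae_restrict_of_ae hξ_deriv, ae_restrict_mem measurableSet_Ici]
      with t ht hmem
    exact ((ht hmem).deriv).symm
  have hmeas0 : AEStronglyMeasurable ξ' (volume.restrict (Set.Ici t0)) :=
    ((measurable_deriv ξ).aestronglyMeasurable).congr hae.symm
  have hmeas : ∀ s : Set ℝ, s ⊆ Set.Ici t0 →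
      AEStronglyMeasurable ξ' (volume.restrict s) := fun s hs =>
    hmeas0.mono_measure (Measure.restrict_mono hs le_rfl)
  -- integrability of β on compact subintervals
  have hβicc : ∀ a b : ℝ, t0 ≤ a → IntegrableOn β (Set.Icc a b) volume := fun a b ha =>
    hβ_loc.integrableOn_compact_subset (fun x hx => le_trans ha hx.1) isCompact_Icc
  have hβii : ∀ a b : ℝ, t0 ≤ a → a ≤ b → IntervalIntegrable β volume a b := by
    intro a b ha hab
    rw [intervalIntegrable_iff_integrableOn_Icc_of_le hab]
    exact hβicc a b ha
  -- a.e. upper bound ξ' ≤ β on [t0,∞)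
  have hub : ∀ᵐ t ∂(volume : Measure ℝ), t0 ≤ t → ξ' t ≤ β t := by
    filter_upwards [hineq] with t ht h0
    nlinarith [ht h0, hξ_nonneg t h0, hC.le, mul_nonneg hC.le (hξ_nonneg t h0)]
  -- the positive part of ξ' is integrable on compact subintervals
  have hposint : ∀ b : ℝ, t0 ≤ b →
      IntervalIntegrable (fun t => max (ξ' t) 0) volume t0 b := by
    intro b hb
    have hInt : IntegrableOn (fun t => max (ξ' t) 0) (Set.Icc t0 b) volume := by
      refine Integrable.mono' (hβicc t0 b le_rfl) ?_ ?_
      · exact (((hmeas _ Set.Icc_subset_Ici_self).aemeasurable).max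
          aemeasurable_const).aestronglyMeasurable
      · filter_upwards [ae_restrict_of_ae hub, ae_restrict_mem measurableSet_Icc]
          with t ht hmem
        have h0 : t0 ≤ t := hmem.1
        rw [Real.norm_eq_abs, abs_of_nonneg (le_max_right _ _)]
        exact max_le (ht h0) (hβ_nonneg t h0)
    rwa [intervalIntegrable_iff_integrableOn_Icc_of_le hb]
  -- main integrability claim
  have hint : ∀ x : ℝ, t0 ≤ x → IntervalIntegrable ξ' volume t0 x := by
    intro x hx
    by_contra hnot
    set S : Set ℝ := {s | s ∈ Set.Icc t0 x ∧ IntervalIntegrable ξ' volume t0 s} with hS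
    have hSne : S.Nonempty := ⟨t0, ⟨le_rfl, hx⟩, IntervalIntegrable.refl⟩
    have hSbdd : BddAbove S := ⟨x, fun s hs => hs.1.2⟩
    set s₁ := sSup S with hs₁
    have hs₁mem : s₁ ∈ Set.Icc t0 x :=
      ⟨le_csSup hSbdd ⟨⟨le_rfl, hx⟩, IntervalIntegrable.refl⟩,
       csSup_le hSne fun s hs => hs.1.2⟩
    -- everything strictly below s₁ is integrable
    have hlt : ∀ s : ℝ, t0 ≤ s → s < s₁ → IntervalIntegrable ξ' volume t0 s := by
      intro s hs hslt
      obtain ⟨s', hs'S, hss'⟩ := exists_lt_of_lt_csSup hSne hslt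
      refine hs'S.2.mono_set ?_
      rw [Set.uIcc_of_le hs, Set.uIcc_of_le (hs.trans hss'.le)]
      exact Set.Icc_subset_Icc le_rfl hss'.le
    -- uniform bound on ∫ ‖ξ'‖ over [t0, s] for s ∈ S
    set B : ℝ := 2 * (∫ s in t0..x, β s) + ξ t0 with hB
    have hnorm : ∀ s : ℝ, s ∈ S → (∫ t in t0..s, ‖ξ' t‖) ≤ B := by
      intro s hs
      obtain ⟨⟨hs0, hsx⟩, hii⟩ := hs
      have habs : ∀ t : ℝ, ‖ξ' t‖ = 2 * max (ξ' t) 0 - ξ' t := by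
        intro t
        rw [Real.norm_eq_abs]
        rcases le_or_gt 0 (ξ' t) with h | h
        · rw [abs_of_nonneg h, max_eq_left h]; ring
        · rw [abs_of_neg h, max_eq_right h.le]; ring
      have h1 : (∫ t in t0..s, ‖ξ' t‖) =
          2 * (∫ t in t0..s, max (ξ' t) 0) - ∫ t in t0..s, ξ' t := by
        simp_rw [habs]
        rw [intervalIntegral.integral_sub ((hposint s hs0).const_mul 2) hii,
          intervalIntegral.integral_const_mul]
      have h2 : (∫ t in t0..s, max (ξ' t) 0) ≤ ∫ t in t0..s, β t := by
        refine intervalIntegral.integral_mono_ae_restrict hs0 (hposint s hs0)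
          (hβii t0 s le_rfl hs0) ?_
        filter_upwards [ae_restrict_of_ae hub, ae_restrict_mem measurableSet_Icc]
          with t ht hmem
        exact max_le (ht hmem.1) (hβ_nonneg t hmem.1)
      have h3 : (∫ t in t0..s, β t) ≤ ∫ t in t0..x, β t := by
        refine intervalIntegral.integral_mono_interval le_rfl hs0 hsx ?_
          (hβii t0 x le_rfl hx)
        filter_upwards [ae_restrict_mem measurableSet_Ioc] with t ht
        exact hβ_nonneg t ht.1.le
      have h4 : (∫ t in t0..s, ξ' t) = ξ s - ξ t0 := (hξ_ftc s hs0).symm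
      have h5 : 0 ≤ ξ s := hξ_nonneg s hs0
      rw [h1, h4, hB]
      linarith
    -- ξ' is integrable up to s₁
    have hs1int : IntervalIntegrable ξ' volume t0 s₁ := by
      rcases eq_or_lt_of_le hs₁mem.1 with heq | hlt1
      · rw [← heq]
      · rw [intervalIntegrable_iff_integrableOn_Ioc_of_le hs₁mem.1]
        set b : ℕ → ℝ := fun n => s₁ - (s₁ - t0) / (n + 1) with hb
        have hbmem : ∀ n : ℕ, t0 ≤ b n ∧ b n < s₁ := by
          intro n
          have h1 : (0:ℝ) < (n:ℝ) + 1 := by positivity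
          constructor
          · have : (s₁ - t0) / (n + 1) ≤ (s₁ - t0) / 1 := by
              apply div_le_div_of_nonneg_left (by linarith) one_pos (by linarith)
            simp only [hb]; linarith [this]
          · have : 0 < (s₁ - t0) / (n + 1) := div_pos (by linarith) h1
            simp only [hb]; linarith
        have hbS : ∀ n : ℕ, b n ∈ S := fun n =>
          ⟨⟨(hbmem n).1, (hbmem n).2.le.trans hs₁mem.2⟩,
            hlt (b n) (hbmem n).1 (hbmem n).2⟩
        refine integrableOn_Ioc_of_intervalIntegral_norm_bounded_right
          (f := ξ') (l := Filter.atTop) (b := b) (I := B) (a := t0) (b₀ := s₁)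
          (fun n => by
            have := (hbS n).2
            rwa [intervalIntegrable_iff_integrableOn_Ioc_of_le (hbmem n).1] at this) ?_ ?_
        · rw [hb]
          have h0 : Filter.Tendsto (fun n : ℕ => (s₁ - t0) / (n + 1)) Filter.atTop (nhds 0) := by
            apply Filter.Tendsto.div_atTop (tendsto_const_nhds)
            exact Filter.tendsto_atTop_add_const_right _ 1 tendsto_natCast_atTop_atTop
          have h1 : Filter.Tendsto (fun n : ℕ => s₁ - (s₁ - t0) / (n + 1))
              Filter.atTop (nhds (s₁ - 0)) :=
            Filter.Tendsto.sub (f := fun _ : ℕ => s₁) tendsto_const_nhds h0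
          simpa using h1
        · filter_upwards with n
          have h1 : (∫ t in Set.Ioc t0 (b n), ‖ξ' t‖) = ∫ t in t0..(b n), ‖ξ' t‖ :=
            (intervalIntegral.integral_of_le (hbmem n).1).symm
          rw [h1]
          exact hnorm (b n) (hbS n)
    -- ξ is constant, hence ξ' vanishes a.e., beyond s₁
    rcases eq_or_lt_of_le hs₁mem.2 with heq | hlt2
    · exact hnot (heq ▸ hs1int)
    · have hconst : ∀ s : ℝ, s ∈ Set.Ioc s₁ x → ξ s = ξ t0 := by
        intro s hsm
        have hnint : ¬ IntervalIntegrable ξ' volume t0 s := by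
          rcases eq_or_lt_of_le hsm.2 with heq | hltx
          · rw [heq]; exact hnot
          · intro hii
            have : s ∈ S := ⟨⟨hs₁mem.1.trans hsm.1.le, hsm.2⟩, hii⟩
            exact absurd (le_csSup hSbdd this) (not_le.2 hsm.1)
        have := hξ_ftc s (hs₁mem.1.trans hsm.1.le)
        rw [intervalIntegral.integral_undef hnint] at this
        linarith
      have hzero : ξ' =ᵐ[volume.restrict (Set.Ioc s₁ x)] 0 := by
        have hIoo : ξ' =ᵐ[volume.restrict (Set.Ioo s₁ x)] 0 := by
          filter_upwards [ae_restrict_of_ae hξ_deriv, ae_restrict_mem measurableSet_Ioo]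
            with t ht hmem
          have h0 : t0 ≤ t := hs₁mem.1.trans hmem.1.le
          have hd : HasDerivAt ξ (ξ' t) t := ht h0
          have hev : ξ =ᶠ[nhds t] fun _ => ξ t0 := by
            filter_upwards [Ioo_mem_nhds hmem.1 hmem.2] with u hu
            exact hconst u ⟨hu.1, hu.2.le⟩
          have hd0 : HasDerivAt ξ 0 t :=
            (hasDerivAt_const t (ξ t0)).congr_of_eventuallyEq hev
          exact hd.unique hd0
        have : volume.restrict (Set.Ioc s₁ x) = volume.restrict (Set.Ioo s₁ x) := by
          rw [← Measure.restrict_congr_set Ioo_ae_eq_Ioc]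
        rw [this]
        exact hIoo
      have htail : IntervalIntegrable ξ' volume s₁ x := by
        rw [intervalIntegrable_iff_integrableOn_Ioc_of_le hlt2.le]
        exact (integrable_zero _ _ _).congr hzero.symm
      exact hnot (hs1int.trans htail)
  -- continuity of ξ on [t0, b]
  have hξcont : ∀ b : ℝ, t0 ≤ b → ContinuousOn ξ (Set.Icc t0 b) := by
    intro b hb
    have h1 : ContinuousOn (fun s => ξ t0 + ∫ t in t0..s, ξ' t) (Set.Icc t0 b) := by
      refine continuousOn_const.add ?_
      have := intervalIntegral.continuousOn_primitive_interval'
        (hint b hb) (Set.left_mem_uIcc (a := t0) (b := b))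
      rwa [Set.uIcc_of_le hb] at this
    refine h1.congr ?_
    intro s hs
    have := hξ_ftc s hs.1
    simp only []
    linarith
  have hξii : ∀ a b : ℝ, t0 ≤ a → a ≤ b → IntervalIntegrable ξ volume a b := by
    intro a b ha hab
    rw [intervalIntegrable_iff_integrableOn_Icc_of_le hab]
    refine ContinuousOn.integrableOn_compact isCompact_Icc ?_
    exact (hξcont b (ha.trans hab)).mono (Set.Icc_subset_Icc ha le_rfl)
  -- difference form of the FTC
  have hdiff : ∀ a b : ℝ, t0 ≤ a → a ≤ b → ξ b - ξ a = ∫ t in a..b, ξ' t := by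
    intro a b ha hab
    have h1 := hξ_ftc b (ha.trans hab)
    have h2 := hξ_ftc a ha
    have h3 := intervalIntegral.integral_interval_sub_left
      (hint b (ha.trans hab)) (hint a ha)
    linarith
  -- one-step estimate
  have step : ∀ a h : ℝ, t0 ≤ a → 0 < h →
      (1 + C * h) * ξ (a + h) ≤ ξ a + (1 + C * h) * ∫ s in a..(a + h), β s := by
    intro a h ha hh
    have hab : a ≤ a + h := by linarith
    have hah : t0 ≤ a + h := le_trans ha hab
    have hiia : IntervalIntegrable ξ' volume a (a + h) :=
      ((hint a ha).symm.trans (hint (a + h) hah))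
    have hξiia : IntervalIntegrable ξ volume a (a + h) := hξii a (a + h) ha hab
    have hβiia : IntervalIntegrable β volume a (a + h) := hβii a (a + h) ha hab
    set m := ∫ s in a..(a + h), β s with hm
    have hm0 : 0 ≤ m := intervalIntegral.integral_nonneg hab
      (fun t ht => hβ_nonneg t (le_trans ha ht.1))
    -- upper bound on increment
    have hmono1 : (∫ t in a..(a + h), ξ' t) ≤ ∫ t in a..(a + h), (β t - C * ξ t) := by
      refine intervalIntegral.integral_mono_ae_restrict hab hiia
        (hβiia.sub (hξiia.const_mul C)) ?_
      filter_upwards [ae_restrict_of_ae hineq, ae_restrict_mem measurableSet_Icc]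
        with t ht hmem
      have h0 : t0 ≤ t := le_trans ha hmem.1
      have := ht h0
      show ξ' t ≤ β t - C * ξ t
      linarith
    have hsplit : (∫ t in a..(a + h), (β t - C * ξ t)) =
        m - C * ∫ t in a..(a + h), ξ t := by
      rw [intervalIntegral.integral_sub hβiia (hξiia.const_mul C),
        intervalIntegral.integral_const_mul]
    -- lower bound for ξ on [a, a+h]
    have hlow : ∀ s ∈ Set.Icc a (a + h), ξ (a + h) - m ≤ ξ s := by
      intro s hs
      have hs0 : t0 ≤ s := le_trans ha hs.1
      have h1 : ξ (a + h) - ξ s = ∫ t in s..(a + h), ξ' t := hdiff s (a + h) hs0 hs.2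
      have h2 : (∫ t in s..(a + h), ξ' t) ≤ ∫ t in s..(a + h), β t := by
        refine intervalIntegral.integral_mono_ae_restrict hs.2
          ((hint s hs0).symm.trans (hint (a + h) hah))
          (hβii s (a + h) hs0 hs.2) ?_
        filter_upwards [ae_restrict_of_ae hub, ae_restrict_mem measurableSet_Icc]
          with t ht hmem
        exact ht (le_trans hs0 hmem.1)
      have h3 : (∫ t in s..(a + h), β t) ≤ m := by
        refine intervalIntegral.integral_mono_interval hs.1 hs.2 le_rfl ?_ hβiia
        filter_upwards [ae_restrict_mem measurableSet_Ioc] with t ht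
        exact hβ_nonneg t (le_trans ha ht.1.le)
      linarith
    have hlow2 : h * (ξ (a + h) - m) ≤ ∫ t in a..(a + h), ξ t := by
      have := intervalIntegral.integral_mono_on hab
        (intervalIntegrable_const (c := ξ (a + h) - m)) hξiia hlow
      rwa [intervalIntegral.integral_const, smul_eq_mul, add_sub_cancel_left] at this
    have hdiff1 : ξ (a + h) - ξ a = ∫ t in a..(a + h), ξ' t := hdiff a (a + h) ha hab
    have hCle : C * (h * (ξ (a + h) - m)) ≤ C * ∫ t in a..(a + h), ξ t :=
      mul_le_mul_of_nonneg_left hlow2 hC.le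
    nlinarith [hmono1, hsplit, hdiff1, hCle]
  -- n-step estimate
  have stepn : ∀ (a L : ℝ), t0 ≤ a → 0 < L → ∀ n : ℕ, 0 < n →
      ξ (a + L) ≤ ((1 + C * (L / n)) ^ n)⁻¹ * ξ a + ∫ s in a..(a + L), β s := by
    intro a L ha hL n hn
    set h := L / n with hdef
    have hnpos : (0:ℝ) < n := by exact_mod_cast hn
    have hh : 0 < h := div_pos hL hnpos
    have hq : (1:ℝ) ≤ 1 + C * h := by nlinarith [mul_pos hC hh]
    have key : ∀ k : ℕ, (1 + C * h) ^ k * ξ (a + k * h) ≤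
        ξ a + (1 + C * h) ^ k * ∫ s in a..(a + k * h), β s := by
      intro k
      induction k with
      | zero => norm_num
      | succ k ih =>
        have hkh : (0:ℝ) ≤ (k:ℝ) * h := by positivity
        have hak : t0 ≤ a + k * h := by linarith
        have hck : (0:ℝ) < (1 + C * h) ^ k := by positivity
        have hstep := step (a + k * h) h hak hh
        have hmul := mul_le_mul_of_nonneg_left hstep hck.le
        have hco : a + (k + 1 : ℕ) * h = a + k * h + h := by push_cast; ring
        have hsplitβ : (∫ s in a..(a + (k+1:ℕ) * h), β s) =
            (∫ s in a..(a + k * h), β s) + ∫ s in (a + k * h)..(a + k * h + h), β s := by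
          rw [hco]
          exact (intervalIntegral.integral_add_adjacent_intervals
            (hβii a (a + k * h) ha (by linarith))
            (hβii (a + k * h) (a + k * h + h) hak (by linarith))).symm
        have hβ1 : 0 ≤ ∫ s in a..(a + k * h), β s :=
          intervalIntegral.integral_nonneg (by linarith)
            (fun t ht => hβ_nonneg t (le_trans ha ht.1))
        have hβ2 : 0 ≤ ∫ s in (a + k * h)..(a + k * h + h), β s :=
          intervalIntegral.integral_nonneg (by linarith)
            (fun t ht => hβ_nonneg t (le_trans hak ht.1))
        have hqpow : (1 + C * h) ^ k ≤ (1 + C * h) ^ (k + 1) :=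
          pow_le_pow_right₀ hq (Nat.le_succ k)
        rw [hco] at hsplitβ
        rw [hco, hsplitβ]
        calc (1 + C * h) ^ (k+1) * ξ (a + k * h + h)
            = (1 + C * h) ^ k * ((1 + C * h) * ξ (a + k * h + h)) := by ring
          _ ≤ (1 + C * h) ^ k * (ξ (a + k * h) +
              (1 + C * h) * ∫ s in (a + k * h)..(a + k * h + h), β s) := hmul
          _ = (1 + C * h) ^ k * ξ (a + k * h) +
              (1 + C * h) ^ (k+1) * ∫ s in (a + k * h)..(a + k * h + h), β s := by ring
          _ ≤ ξ a + (1 + C * h) ^ k * (∫ s in a..(a + k * h), β s) +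
              (1 + C * h) ^ (k+1) * ∫ s in (a + k * h)..(a + k * h + h), β s := by
                linarith
          _ ≤ ξ a + (1 + C * h) ^ (k+1) * ((∫ s in a..(a + k * h), β s) +
              ∫ s in (a + k * h)..(a + k * h + h), β s) := by
                nlinarith [mul_le_mul_of_nonneg_right hqpow hβ1]
    have hnh : (n:ℝ) * h = L := by
      rw [hdef]; field_simp
    have hkey := key n
    rw [hnh] at hkey
    have hqn : (0:ℝ) < (1 + C * h) ^ n := by positivity
    have hgoal : (1 + C * h) ^ n * ξ (a + L) ≤
        (1 + C * h) ^ n * (((1 + C * h) ^ n)⁻¹ * ξ a + ∫ s in a..(a + L), β s) := by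
      rw [mul_add, ← mul_assoc, mul_inv_cancel₀ hqn.ne', one_mul]
      linarith [hkey]
    exact le_of_mul_le_mul_left hgoal hqn
  -- continuous-time one-step estimate via n → ∞
  have stepL : ∀ (a L : ℝ), t0 ≤ a → 0 < L →
      ξ (a + L) ≤ Real.exp (-(C * L)) * ξ a + ∫ s in a..(a + L), β s := by
    intro a L ha hL
    have hten : Filter.Tendsto
        (fun n : ℕ => ((1 + (C * L) / n) ^ n)⁻¹ * ξ a + ∫ s in a..(a + L), β s)
        Filter.atTop (nhds ((Real.exp (C * L))⁻¹ * ξ a + ∫ s in a..(a + L), β s)) := by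
      refine Filter.Tendsto.add ?_ tendsto_const_nhds
      exact (((Real.tendsto_one_add_div_pow_exp (C * L)).inv₀ (Real.exp_ne_zero _)).mul_const _)
    have hbound : ∀ᶠ n : ℕ in Filter.atTop,
        ξ (a + L) ≤ ((1 + (C * L) / n) ^ n)⁻¹ * ξ a + ∫ s in a..(a + L), β s := by
      filter_upwards [Filter.eventually_gt_atTop 0] with n hn
      have := stepn a L ha hL n hn
      have harg : C * (L / n) = (C * L) / n := by ring
      rwa [harg] at this
    have := ge_of_tendsto hten hbound
    rwa [Real.exp_neg] 
  -- the geometric constant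
  set S₀ : ℝ := Real.exp (C * T) / (Real.exp (C * T) - 1) with hS₀
  have hexp1 : 1 < Real.exp (C * T) := by
    rw [← Real.exp_zero]
    exact Real.exp_lt_exp.2 (by positivity)
  have hden : 0 < Real.exp (C * T) - 1 := by linarith
  have hS₀pos : 0 < S₀ := div_pos (by positivity) hden
  have hS₀ge1 : 1 ≤ S₀ := by
    rw [hS₀, le_div_iff₀ hden]; linarith
  have hgeom : Real.exp (-(C * T)) * S₀ + 1 = S₀ := by
    rw [hS₀, Real.exp_neg]
    field_simp
    ring
  -- chained estimate
  have claim : ∀ k : ℕ, ∀ t : ℝ, t0 ≤ t → t ≤ t0 + k * T →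
      ξ t ≤ Real.exp (-(C * (t - t0))) * ξ t0 + M * S₀ := by
    intro k
    induction k with
    | zero =>
      intro t ht ht'
      have : t = t0 := le_antisymm (by simpa using ht') ht
      subst this
      simp only [sub_self, mul_zero, neg_zero, Real.exp_zero, one_mul]
      nlinarith [mul_pos hM hS₀pos]
    | succ k ih =>
      intro t ht ht'
      rcases le_or_gt t (t0 + k * T) with hle | hgt
      · exact ih t ht hle
      · -- one T-step back, or a short first step
        rcases Nat.eq_zero_or_pos k with hk0 | hkpos
        · -- t ∈ (t0, t0 + T]
          subst hk0
          have htT : t ≤ t0 + T := by push_cast at ht'; linarith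
          have htgt : t0 < t := by
            have : (0:ℝ) ≤ (0:ℕ) * T := by norm_num
            push_cast at hgt; linarith
          have hL : 0 < t - t0 := by linarith
          have h1 := stepL t0 (t - t0) le_rfl hL
          rw [add_sub_cancel] at h1
          have h2 : (∫ s in t0..t, β s) ≤ ∫ s in t0..(t0 + T), β s := by
            refine intervalIntegral.integral_mono_interval le_rfl ht (by linarith) ?_
              (hβii t0 (t0 + T) le_rfl (by linarith))
            filter_upwards [ae_restrict_mem measurableSet_Ioc] with u hu
            exact hβ_nonneg u hu.1.le
          have h3 := hsup t0 le_rfl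
          have h4 : M ≤ M * S₀ := by nlinarith
          linarith
        · -- t - T ≥ t0: use the inductive bound at t - T
          have hkT : (1:ℝ) ≤ (k:ℝ) := by exact_mod_cast hkpos
          have haT : t0 ≤ t - T := by
            have : t0 + (k:ℝ) * T < t := hgt
            nlinarith
          have haT' : t - T ≤ t0 + k * T := by push_cast at ht'; linarith
          have hihb := ih (t - T) haT haT'
          have hstepT := stepL (t - T) T haT hT
          rw [sub_add_cancel] at hstepT
          have hβM : (∫ s in (t - T)..t, β s) ≤ M := by
            have := hsup (t - T) haT
            rwa [sub_add_cancel] at this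
          have hexps : Real.exp (-(C * T)) * Real.exp (-(C * (t - T - t0))) =
              Real.exp (-(C * (t - t0))) := by
            rw [← Real.exp_add]; ring_nf
          have hexppos : (0:ℝ) < Real.exp (-(C * T)) := Real.exp_pos _
          calc ξ t ≤ Real.exp (-(C * T)) * ξ (t - T) + ∫ s in (t - T)..t, β s := hstepT
            _ ≤ Real.exp (-(C * T)) * (Real.exp (-(C * (t - T - t0))) * ξ t0 + M * S₀) + M := by
                have := mul_le_mul_of_nonneg_left hihb hexppos.le
                linarith
            _ = Real.exp (-(C * (t - t0))) * ξ t0 + M * (Real.exp (-(C * T)) * S₀ + 1) := by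
                rw [mul_add, ← mul_assoc, hexps]; ring
            _ = Real.exp (-(C * (t - t0))) * ξ t0 + M * S₀ := by rw [hgeom]
  -- conclusion
  intro t ht
  obtain ⟨k, hk⟩ : ∃ k : ℕ, t ≤ t0 + k * T := by
    refine ⟨⌈(t - t0) / T⌉₊, ?_⟩
    have h1 : (t - t0) / T ≤ ⌈(t - t0) / T⌉₊ := Nat.le_ceil _
    have h2 : t - t0 ≤ ⌈(t - t0) / T⌉₊ * T := by
      rw [div_le_iff₀ hT] at h1
      linarith
    linarith
  have hmain := claim _ t ht hk
  have hS₀le : S₀ ≤ Real.exp (2 * C * T) / (Real.exp (C * T) - 1) := by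
    rw [hS₀]
    gcongr
    linarith
  have hexpeq : Real.exp (-(C * (t - t0))) = Real.exp (-C * (t - t0)) := by ring_nf
  rw [hexpeq] at hmain
  nlinarith [hmain, mul_le_mul_of_nonneg_left hS₀le hM.le]
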